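/- Let B be a left brace with B³ = 0. Then for every a ∈ B and every integer m: m·a = aᵐ · (a ∗ a)^s in the multiplicative group, where s = −m(m−1)/2. -/

import Mathlib

/-- A left brace: an abelian group `(B,+)` and a group `(B,·)` on the same set,
with common identity (`0 = 1`), satisfying `a·(b+c) = a·b − a + a·c`. -/
class LeftBrace (B : Type*) extends AddCommGroup B, Group B where
  zero_eq_one : (0 : B) = 1
  brace_distrib : ∀ a b c : B, a * (b + c) = a * b - a + a * c

/-- The star operation `a ∗ b = a·b − a − b`. -/
def bstar {B : Type*} [LeftBrace B] (a b : B) : B := a * b - a - b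

section Aux

lemma two_dvd_mul_pred (n : ℤ) : 2 ∣ n * (n - 1) := by
  have h := (Int.even_mul_succ_self (n - 1)).two_dvd
  have he : (n - 1) * (n - 1 + 1) = n * (n - 1) := by ring
  rwa [he] at h


variable {B : Type*} [LeftBrace B]

lemma lb_distrib (x b c : B) : x * (b + c) = x * b - x + x * c :=
  LeftBrace.brace_distrib x b c

lemma lb_mul_zero (x : B) : x * 0 = x := by
  have h := lb_distrib x 0 0
  rw [add_zero] at h
  have h2 : x * 0 - x = -(x * 0 - (x * 0 - x + x * 0)) := by abel
  rw [← h] at h2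
  simp at h2
  exact sub_eq_zero.mp h2

lemma lb_mul_neg (x b : B) : x * (-b) = x - x * b + x := by
  have h := lb_distrib x b (-b)
  rw [add_neg_cancel, lb_mul_zero] at h
  have h2 : x * (-b) = (x * b - x + x * (-b)) - x * b + x := by abel
  rw [← h] at h2
  exact h2

lemma lb_mul_zsmul (x b : B) (k : ℤ) : x * (k • b) = x + k • (x * b - x) := by
  induction k using Int.induction_on with
  | zero => simp [lb_mul_zero]
  | succ k ih =>
      have h : ((k : ℤ) + 1) • b = (k : ℤ) • b + b := by
        rw [add_smul, one_smul]
      rw [h, lb_distrib, ih, add_smul, one_smul]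
      abel
  | pred k ih =>
      have h : (-(k : ℤ) - 1) • b = (-(k : ℤ)) • b + (-b) := by
        rw [sub_smul, one_smul]; abel
      rw [h, lb_distrib, ih, lb_mul_neg, sub_smul, one_smul]
      abel

end Aux

theorem stmt10 {B : Type*} [LeftBrace B]
    (hB3 : ∀ a b c : B, bstar a (bstar b c) = 0) (a : B) (m : ℤ) :
    m • a = a ^ m * (bstar a a) ^ (-(m * (m - 1) / 2)) := by
  set t : B := bstar a a with ht_def
  -- every element multiplied by t just adds t
  have ht : ∀ x : B, x * t = x + t := by
    intro x
    have h := hB3 x a a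
    rw [← ht_def] at h
    unfold bstar at h
    have h2 : x * t - (x + t) = 0 := by rw [← h]; abel
    exact sub_eq_zero.mp h2
  -- a * a = 2a + t
  have haa : a * a = a + a + t := by
    rw [ht_def]; unfold bstar; abel
  -- multiplication by combinations
  have key : ∀ k c : ℤ, a * (k • a + c • t) = (k + 1) • a + (k + c) • t := by
    intro k c
    rw [lb_distrib, lb_mul_zsmul, lb_mul_zsmul, haa, ht a]
    have h1 : a + a + t - a = a + t := by abel
    have h2 : a + t - a = t := by abel
    rw [h1, h2, smul_add, add_smul, add_smul, one_smul]
    abel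
  -- powers of a
  have pw : ∀ n : ℤ, a ^ n = n • a + (n * (n - 1) / 2) • t := by
    intro n
    induction n using Int.induction_on with
    | zero => simp [← LeftBrace.zero_eq_one]
    | succ k ih =>
        have hz : a ^ ((k : ℤ) + 1) = a * a ^ (k : ℤ) := by
          rw [show ((k : ℤ) + 1) = 1 + k by ring, zpow_add, zpow_one]
        rw [hz, ih, key]
        congr 2
        have h1 : ((k : ℤ) + 1) * ((k : ℤ) + 1 - 1) = (k : ℤ) * ((k : ℤ) - 1) + 2 * (k : ℤ) := by
          ring
        have h2 := two_dvd_mul_pred (k : ℤ)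
        omega
    | pred k ih =>
        have hX : a * ((-(k : ℤ) - 1) • a + ((-(k : ℤ) - 1) * ((-(k : ℤ) - 1) - 1) / 2) • t)
            = a ^ (-(k : ℤ)) := by
          rw [key, ih]
          congr 2
          · omega
          · have h1 : -(k : ℤ) * (-(k : ℤ) - 1) =
                (-(k : ℤ) - 1) * (-(k : ℤ) - 1 - 1) + 2 * (-(k : ℤ) - 1) := by ring
            have h2 := two_dvd_mul_pred (-(k : ℤ) - 1)
            omega
        have hz : a ^ (-(k : ℤ) - 1) = a⁻¹ * a ^ (-(k : ℤ)) := by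
          rw [show (-(k : ℤ) - 1) = -1 + -(k : ℤ) by ring, zpow_add, zpow_neg_one]
        rw [hz, ← hX, inv_mul_cancel_left]
  -- powers of t
  have htneg : ∀ x : B, x * (-t) = x - t := by
    intro x
    rw [lb_mul_neg, ht]
    abel
  have tinv : t⁻¹ = -t := by
    symm
    apply eq_inv_of_mul_eq_one_right
    rw [htneg, sub_self, LeftBrace.zero_eq_one]
  have tz : ∀ n : ℤ, t ^ n = n • t := by
    intro n
    induction n using Int.induction_on with
    | zero => simp [← LeftBrace.zero_eq_one]
    | succ k ih =>
        rw [zpow_add_one, ih, ht, add_smul, one_smul]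
    | pred k ih =>
        rw [zpow_sub_one, ih, tinv, htneg, sub_smul, one_smul]
  -- conclude
  have hx : ∀ (x : B) (c : ℤ), x * (c • t) = x + c • t := by
    intro x c
    rw [lb_mul_zsmul, ht]
    congr 1
    congr 1
    abel
  rw [tz, hx, pw]
  have : m • a + (m * (m - 1) / 2) • t + (-(m * (m - 1) / 2)) • t
      = m • a + ((m * (m - 1) / 2) + (-(m * (m - 1) / 2))) • t := by
    rw [add_smul]; abel
  rw [this]
  simp
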